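/- Let μ, λ ≥ 0 with λ + μ > 1 and |λ − μ| ≥ √(λ+μ), and suppose X, X' ~ Poisson(μ) and Y, Y' ~ Poisson(λ) are mutually independent. Then Δ := E[|X−Y| + |X'−Y'| − |X−X'| − |Y−Y'|] ≥ (1/5)·|λ−μ|. -/

import Mathlib

open MeasureTheory ProbabilityTheory

/-- The Poisson distribution with mean `m ≥ 0`, as a measure on `ℝ` supported on `ℕ`. -/
noncomputable def poissonRealMeasure (m : ℝ) : Measure ℝ :=
  Measure.sum fun k : ℕ =>
    ENNReal.ofReal (Real.exp (-m) * m ^ k / (Nat.factorial k : ℝ)) • Measure.dirac (k : ℝ)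


open Finset
open scoped ENNReal

namespace PoisGap

set_option maxHeartbeats 1000000

noncomputable def pois (m : ℝ) (k : ℕ) : ℝ := Real.exp (-m) * m ^ k / (Nat.factorial k : ℝ)

noncomputable def F (m : ℝ) (t : ℕ) : ℝ := ∑ j ∈ range (t+1), pois m j




lemma pois_nonneg {m : ℝ} (hm : 0 ≤ m) (k : ℕ) : 0 ≤ pois m k := by unfold pois; positivity

lemma hasSum_pois (m : ℝ) : HasSum (pois m) 1 := by
  have h : HasSum (fun n : ℕ => m ^ n / (Nat.factorial n : ℝ)) (Real.exp m) := by
    rw [Real.exp_eq_exp_ℝ]; exact NormedSpace.expSeries_div_hasSum_exp m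
  have := h.mul_left (Real.exp (-m))
  convert this using 2 with k
  · rfl
  · unfold pois; ring
  · rw [← Real.exp_add]; simp

lemma fact_cast_succ (k : ℕ) : (Nat.factorial (k+1) : ℝ) = ((k:ℝ)+1) * Nat.factorial k := by
  push_cast [Nat.factorial_succ]; ring

lemma pois_shift1 (m : ℝ) (k : ℕ) : pois m (k + 1) * ((k:ℝ) + 1) = m * pois m k := by
  unfold pois
  rw [fact_cast_succ]
  have h2 : (Nat.factorial k : ℝ) ≠ 0 := Nat.cast_ne_zero.2 (Nat.factorial_ne_zero k)
  have h3 : ((k:ℝ) + 1) ≠ 0 := by positivity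
  field_simp; ring

lemma pois_shift2 (m : ℝ) (k : ℕ) :
    pois m (k + 2) * (((k:ℝ)+2) * ((k:ℝ)+1)) = m^2 * pois m k := by
  unfold pois
  rw [show k+2 = (k+1)+1 from rfl, fact_cast_succ, fact_cast_succ]
  have h2 : (Nat.factorial k : ℝ) ≠ 0 := Nat.cast_ne_zero.2 (Nat.factorial_ne_zero k)
  have h3 : ((k:ℝ) + 1) ≠ 0 := by positivity
  have h4 : ((k:ℝ) + 1 + 1) ≠ 0 := by positivity
  push_cast
  field_simp
  ring

lemma pois_shift3 (m : ℝ) (k : ℕ) :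
    pois m (k + 3) * (((k:ℝ)+3) * ((k:ℝ)+2) * ((k:ℝ)+1)) = m^3 * pois m k := by
  unfold pois
  rw [show k+3 = ((k+1)+1)+1 from rfl, fact_cast_succ, fact_cast_succ, fact_cast_succ]
  have h2 : (Nat.factorial k : ℝ) ≠ 0 := Nat.cast_ne_zero.2 (Nat.factorial_ne_zero k)
  have h3 : ((k:ℝ) + 1) ≠ 0 := by positivity
  have h4 : ((k:ℝ) + 1 + 1) ≠ 0 := by positivity
  have h5 : ((k:ℝ) + 1 + 1 + 1) ≠ 0 := by positivity
  push_cast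
  field_simp
  ring

lemma pois_shift4 (m : ℝ) (k : ℕ) :
    pois m (k + 4) * (((k:ℝ)+4) * ((k:ℝ)+3) * ((k:ℝ)+2) * ((k:ℝ)+1)) = m^4 * pois m k := by
  unfold pois
  rw [show k+4 = (((k+1)+1)+1)+1 from rfl, fact_cast_succ, fact_cast_succ, fact_cast_succ,
    fact_cast_succ]
  have h2 : (Nat.factorial k : ℝ) ≠ 0 := Nat.cast_ne_zero.2 (Nat.factorial_ne_zero k)
  have h3 : ((k:ℝ) + 1) ≠ 0 := by positivity
  have h4 : ((k:ℝ) + 1 + 1) ≠ 0 := by positivity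
  have h5 : ((k:ℝ) + 1 + 1 + 1) ≠ 0 := by positivity
  have h6 : ((k:ℝ) + 1 + 1 + 1 + 1) ≠ 0 := by positivity
  push_cast
  field_simp
  ring

lemma hasSum_pois_d1 (m : ℝ) : HasSum (fun k : ℕ => pois m k * k) m := by
  have h : HasSum (fun k : ℕ => pois m (k + 1) * ((k:ℝ) + 1)) m := by
    have := (hasSum_pois m).mul_left m
    simp only [mul_one] at this
    convert this using 2 with k
    · rfl
    rw [pois_shift1]
  have h2 := (hasSum_nat_add_iff (f := fun k : ℕ => pois m k * k) 1).mp (by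
    convert h using 2 with k; rfl; push_cast; ring)
  simpa using h2

lemma hasSum_pois_d2 (m : ℝ) : HasSum (fun k : ℕ => pois m k * (k * ((k:ℝ) - 1))) (m^2) := by
  have h : HasSum (fun k : ℕ => pois m (k + 2) * (((k:ℝ)+2) * ((k:ℝ) + 1))) (m^2) := by
    have := (hasSum_pois m).mul_left (m^2)
    simp only [mul_one] at this
    convert this using 2 with k
    · rfl
    rw [pois_shift2]
  have h2 := (hasSum_nat_add_iff (f := fun k : ℕ => pois m k * (k * ((k:ℝ)-1))) 2).mp (by
    convert h using 2 with k; rfl; push_cast; ring)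
  have h3 : ∑ i ∈ range 2, pois m i * (i * ((i:ℝ)-1)) = 0 := by
    simp [Finset.sum_range_succ]
  rw [h3, add_zero] at h2
  exact h2

lemma hasSum_pois_d3 (m : ℝ) :
    HasSum (fun k : ℕ => pois m k * (k * ((k:ℝ) - 1) * ((k:ℝ) - 2))) (m^3) := by
  have h : HasSum (fun k : ℕ => pois m (k + 3) * (((k:ℝ)+3) * ((k:ℝ)+2) * ((k:ℝ) + 1))) (m^3) := by
    have := (hasSum_pois m).mul_left (m^3)
    simp only [mul_one] at this
    convert this using 2 with k
    · rfl
    rw [pois_shift3]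
  have h2 := (hasSum_nat_add_iff (f := fun k : ℕ => pois m k * (k * ((k:ℝ)-1) * ((k:ℝ)-2))) 3).mp (by
    convert h using 2 with k; rfl; push_cast; ring)
  have h3 : ∑ i ∈ range 3, pois m i * (i * ((i:ℝ)-1) * ((i:ℝ)-2)) = 0 := by
    simp [Finset.sum_range_succ]
  rw [h3, add_zero] at h2
  exact h2

lemma hasSum_pois_d4 (m : ℝ) :
    HasSum (fun k : ℕ => pois m k * (k * ((k:ℝ) - 1) * ((k:ℝ) - 2) * ((k:ℝ) - 3))) (m^4) := by
  have h : HasSum (fun k : ℕ => pois m (k + 4) * (((k:ℝ)+4) * ((k:ℝ)+3) * ((k:ℝ)+2) * ((k:ℝ) + 1))) (m^4) := by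
    have := (hasSum_pois m).mul_left (m^4)
    simp only [mul_one] at this
    convert this using 2 with k
    · rfl
    rw [pois_shift4]
  have h2 := (hasSum_nat_add_iff
    (f := fun k : ℕ => pois m k * (k * ((k:ℝ)-1) * ((k:ℝ)-2) * ((k:ℝ)-3))) 4).mp (by
    convert h using 2 with k; rfl; push_cast; ring)
  have h3 : ∑ i ∈ range 4, pois m i * (i * ((i:ℝ)-1) * ((i:ℝ)-2) * ((i:ℝ)-3)) = 0 := by
    simp [Finset.sum_range_succ]
  rw [h3, add_zero] at h2
  exact h2

/-- Fourth central moment of Poisson. -/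
lemma hasSum_pois_c4 (m : ℝ) :
    HasSum (fun k : ℕ => pois m k * ((k:ℝ) - m)^4) (m + 3*m^2) := by
  have H := ((hasSum_pois_d4 m).add (((hasSum_pois_d3 m).mul_left (6-4*m)).add
    (((hasSum_pois_d2 m).mul_left (7-12*m+6*m^2)).add
    (((hasSum_pois_d1 m).mul_left (1-4*m+6*m^2-4*m^3)).add ((hasSum_pois m).mul_left (m^4))))))
  convert H using 1
  · funext k; ring
  · ring






lemma F_nonneg {m : ℝ} (hm : 0 ≤ m) (t : ℕ) : 0 ≤ F m t :=
  Finset.sum_nonneg fun j _ => pois_nonneg hm j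

lemma hasSum_tail (m : ℝ) (n : ℕ) :
    HasSum (fun j => pois m (j + n)) (1 - ∑ j ∈ range n, pois m j) := by
  refine (hasSum_nat_add_iff n).2 ?_
  have : (1 - ∑ j ∈ range n, pois m j) + ∑ i ∈ range n, pois m i = 1 := by ring
  rw [this]
  exact hasSum_pois m

lemma F_le_one {m : ℝ} (hm : 0 ≤ m) (t : ℕ) : F m t ≤ 1 :=
  sum_le_hasSum _ (fun j _ => pois_nonneg hm j) (hasSum_pois m)

lemma one_sub_F (m : ℝ) (t : ℕ) :
    HasSum (fun j => pois m (j + (t+1))) (1 - F m t) := hasSum_tail m (t+1)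

lemma hasSum_tail_d1 (m : ℝ) (n : ℕ) :
    HasSum (fun j => pois m (j + n) * ((j:ℝ) + n)) (m - ∑ j ∈ range n, pois m j * j) := by
  have : (m - ∑ j ∈ range n, pois m j * j) + ∑ i ∈ range n, pois m i * i = m := by ring
  have h2 := (hasSum_nat_add_iff (f := fun k : ℕ => pois m k * k)
    (g := m - ∑ j ∈ range n, pois m j * j) n).2 (by rw [this]; exact hasSum_pois_d1 m)
  convert h2 using 2 with j
  · rfl
  push_cast; ring

/-- partial-sum identity -/
lemma partial_one_sub_F (m : ℝ) (n : ℕ) :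
    ∑ t ∈ range n, (1 - F m t)
      = n * (1 - ∑ j ∈ range n, pois m j) + ∑ j ∈ range n, pois m j * j := by
  induction n with
  | zero => simp
  | succ n ih =>
    rw [Finset.sum_range_succ, ih, Finset.sum_range_succ (f := pois m),
      Finset.sum_range_succ (f := fun j => pois m j * j)]
    unfold F
    rw [Finset.sum_range_succ (f := pois m)]
    push_cast
    ring

lemma partial_one_sub_F_le {m : ℝ} (hm : 0 ≤ m) (n : ℕ) :
    ∑ t ∈ range n, (1 - F m t) ≤ m := by
  rw [partial_one_sub_F]
  have h1 : (n:ℝ) * (1 - ∑ j ∈ range n, pois m j) ≤ m - ∑ j ∈ range n, pois m j * j := by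
    have htail := hasSum_tail m n
    have htd1 := hasSum_tail_d1 m n
    have h2 : (n:ℝ) * (1 - ∑ j ∈ range n, pois m j) = ∑' j : ℕ, (n:ℝ) * pois m (j + n) := by
      rw [tsum_mul_left, htail.tsum_eq]
    rw [h2, ← htd1.tsum_eq]
    refine Summable.tsum_le_tsum (fun j => ?_) ((htail.mul_left _).summable.congr fun j => by ring)
      htd1.summable
    have := pois_nonneg hm (j + n)
    nlinarith [this, Nat.cast_nonneg (α := ℝ) j]
  linarith

lemma one_sub_F_nonneg {m : ℝ} (hm : 0 ≤ m) (t : ℕ) : 0 ≤ 1 - F m t := by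
  have := F_le_one hm t; linarith

lemma hasSum_one_sub_F {m : ℝ} (hm : 0 ≤ m) : HasSum (fun t => 1 - F m t) m := by
  have hsummable : Summable (fun t => 1 - F m t) :=
    summable_of_sum_range_le (fun t => one_sub_F_nonneg hm t) (partial_one_sub_F_le hm)
  rw [hsummable.hasSum_iff_tendsto_nat]
  -- partial sums tend to m
  have hd1 := hasSum_pois_d1 m
  have hSm : Filter.Tendsto (fun n => ∑ j ∈ range n, pois m j * j) Filter.atTop (nhds m) :=
    hd1.tendsto_sum_nat
  have hzero : Filter.Tendsto (fun n : ℕ => (n:ℝ) * (1 - ∑ j ∈ range n, pois m j))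
      Filter.atTop (nhds 0) := by
    apply squeeze_zero (g := fun n => m - ∑ j ∈ range n, pois m j * j)
    · intro n
      have htail := hasSum_tail m n
      have : (0:ℝ) ≤ 1 - ∑ j ∈ range n, pois m j :=
        htail.nonneg fun j => pois_nonneg hm _
      positivity
    · intro n
      have h1 : (n:ℝ) * (1 - ∑ j ∈ range n, pois m j) ≤ m - ∑ j ∈ range n, pois m j * j := by
        have htail := hasSum_tail m n
        have htd1 := hasSum_tail_d1 m n
        have h2 : (n:ℝ) * (1 - ∑ j ∈ range n, pois m j) = ∑' j : ℕ, (n:ℝ) * pois m (j + n) := by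
          rw [tsum_mul_left, htail.tsum_eq]
        rw [h2, ← htd1.tsum_eq]
        refine Summable.tsum_le_tsum (fun j => ?_) ((htail.mul_left _).summable.congr fun j => by ring)
          htd1.summable
        have := pois_nonneg hm (j + n)
        nlinarith [this, Nat.cast_nonneg (α := ℝ) j]
      exact h1
    · have : Filter.Tendsto (fun n => m - ∑ j ∈ range n, pois m j * j) Filter.atTop
          (nhds (m - m)) := (tendsto_const_nhds).sub hSm
      simpa using this
  have := hzero.add hSm
  simp only [zero_add] at this
  apply this.congr
  intro n
  rw [partial_one_sub_F]




/-- Chebyshev-type bound, left tail. -/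
lemma cheb_left {m : ℝ} (hm : 0 ≤ m) (t : ℕ) (x : ℝ) (hx : 0 < x)
    (hxt : (t:ℝ) ≤ m - x) : F m t ≤ (m + 3*m^2) / x^4 := by
  rw [le_div_iff₀ (by positivity)]
  have h1 : ∀ j ∈ range (t+1), pois m j * x^4 ≤ pois m j * ((j:ℝ) - m)^4 := by
    intro j hj
    have hj' : (j:ℝ) ≤ t := by
      have := Finset.mem_range.1 hj
      exact_mod_cast Nat.lt_succ_iff.1 this
    have h2 : x ≤ m - j := by linarith
    have h3 : x^4 ≤ (m - j)^4 := pow_le_pow_left₀ hx.le h2 4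
    have h4 : (m - (j:ℝ))^4 = ((j:ℝ) - m)^4 := by ring
    nlinarith [pois_nonneg hm j]
  calc F m t * x^4 = ∑ j ∈ range (t+1), pois m j * x^4 := by
        rw [F, Finset.sum_mul]
    _ ≤ ∑ j ∈ range (t+1), pois m j * ((j:ℝ) - m)^4 := Finset.sum_le_sum h1
    _ ≤ m + 3*m^2 := sum_le_hasSum _ (fun j _ => mul_nonneg (pois_nonneg hm j) (by positivity))
        (hasSum_pois_c4 m)

/-- Chebyshev-type bound, right tail. -/
lemma cheb_right {m : ℝ} (hm : 0 ≤ m) (t : ℕ) (x : ℝ) (hx : 0 < x)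
    (hxt : m + x ≤ (t:ℝ) + 1) : 1 - F m t ≤ (m + 3*m^2) / x^4 := by
  rw [le_div_iff₀ (by positivity)]
  have hsum := one_sub_F m t
  have hc4 := hasSum_pois_c4 m
  have hshift : HasSum (fun j => pois m (j + (t+1)) * (((j + (t+1) : ℕ):ℝ) - m)^4)
      (∑' j : ℕ, pois m (j + (t+1)) * (((j + (t+1) : ℕ):ℝ) - m)^4) := by
    refine ((summable_nat_add_iff (t+1)).2 hc4.summable).hasSum
  have hle : (1 - F m t) * x^4 = ∑' j : ℕ, pois m (j + (t+1)) * x^4 := by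
    rw [tsum_mul_right, hsum.tsum_eq]
  rw [hle]
  have step1 : ∑' j : ℕ, pois m (j + (t+1)) * x^4
      ≤ ∑' j : ℕ, pois m (j + (t+1)) * (((j + (t+1) : ℕ):ℝ) - m)^4 := by
    refine Summable.tsum_le_tsum (fun j => ?_) ((hsum.mul_right _).summable) hshift.summable
    have hj : x ≤ ((j + (t+1) : ℕ):ℝ) - m := by
      push_cast
      have : (0:ℝ) ≤ j := Nat.cast_nonneg j
      linarith
    have h3 : x^4 ≤ (((j + (t+1) : ℕ):ℝ) - m)^4 := pow_le_pow_left₀ hx.le hj 4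
    nlinarith [pois_nonneg hm (j + (t+1))]
  refine step1.trans ?_
  -- tail sum of nonneg series ≤ total
  have := Summable.sum_add_tsum_nat_add (f := fun k => pois m k * ((k:ℝ) - m)^4) (t+1) hc4.summable
  rw [hc4.tsum_eq] at this
  have hpart : 0 ≤ ∑ i ∈ range (t+1), pois m i * ((i:ℝ) - m)^4 :=
    Finset.sum_nonneg fun i _ => mul_nonneg (pois_nonneg hm i) (by positivity)
  have : ∑' j : ℕ, pois m (j + (t+1)) * (((j + (t+1):ℕ):ℝ) - m)^4 ≤ m + 3*m^2 := by
    push_cast at this ⊢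
    linarith
  exact this

/-- telescoping bound for 1/x^4 -/
lemma tele {x : ℝ} (hx : 1/2 < x) :
    1/x^4 ≤ 1/(3*(x - 1/2)^3) - 1/(3*(x + 1/2)^3) := by
  have h1 : (0:ℝ) < x - 1/2 := by linarith
  have h2 : (0:ℝ) < x + 1/2 := by linarith
  have h0 : (0:ℝ) < x := by linarith
  rw [div_sub_div _ _ (by positivity) (by positivity), div_le_div_iff₀ (by positivity) (by positivity)]
  nlinarith [pow_pos h0 2, sq_nonneg x, sq_nonneg (x^2 - 1/4), pow_pos h0 4, pow_pos h1 3,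
    pow_pos h2 3, mul_pos (pow_pos h1 3) (pow_pos h2 3)]

/-- finite left telescoping sum -/
lemma sumtel {m : ℝ} (hm : 0 ≤ m) :
    ∀ n : ℕ, (n:ℝ) < m + 1/2 →
      ∑ t ∈ range n, 1/(m - t)^4 ≤ 1/(3*(m - n + 1/2)^3) := by
  intro n
  induction n with
  | zero => intro _; simp; positivity
  | succ n ih =>
    intro hn
    push_cast at hn
    have hn' : (n:ℝ) < m + 1/2 := by linarith
    have hx : 1/2 < m - n := by linarith
    rw [Finset.sum_range_succ]
    have h2 := tele hx
    have := ih hn'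
    push_cast
    have he1 : m - (n:ℝ) - 1/2 = m - ((n:ℝ)+1) + 1/2 := by ring
    calc ∑ t ∈ range n, 1/(m - t)^4 + 1/(m - n)^4
        ≤ 1/(3*(m - n + 1/2)^3) + (1/(3*(m - n - 1/2)^3) - 1/(3*(m - n + 1/2)^3)) := by
          rw [show (1:ℝ)/(3*(m - (n:ℝ) - 1/2)^3) - 1/(3*(m - (n:ℝ) + 1/2)^3)
            = 1/(3*((m-(n:ℝ)) - 1/2)^3) - 1/(3*((m-(n:ℝ)) + 1/2)^3) by ring_nf]
          exact add_le_add this h2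
    _ = 1/(3*(m - ((n:ℝ)+1) + 1/2)^3) := by rw [← he1]; ring

/-- infinite right telescoping sum -/
lemma tsumtel_partial {x₀ : ℝ} (h : 1/2 < x₀) :
    ∀ n : ℕ, ∑ k ∈ range n, 1/(x₀ + k)^4
      ≤ 1/(3*(x₀ - 1/2)^3) - 1/(3*(x₀ + n - 1/2)^3) := by
  intro n
  induction n with
  | zero => simp
  | succ n ih =>
    rw [Finset.sum_range_succ]
    have hx : 1/2 < x₀ + n := by
      have : (0:ℝ) ≤ n := Nat.cast_nonneg n
      linarith
    have h2 := tele hx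
    have e2 : (1:ℝ)/(3*(x₀ + (↑(n+1):ℝ) - 1/2)^3) = 1/(3*(x₀ + (n:ℝ) + 1/2)^3) := by
      push_cast; ring_nf
    rw [e2]
    linarith [ih, h2]

lemma summable_invpow4 {x₀ : ℝ} (h : 1/2 < x₀) :
    Summable (fun k : ℕ => 1/(x₀ + k)^4) := by
  refine summable_of_sum_range_le (c := 1/(3*(x₀ - 1/2)^3)) (fun k => by positivity) (fun n => ?_)
  have h1 := tsumtel_partial h n
  have h2 : (0:ℝ) < x₀ + n - 1/2 := by
    have : (0:ℝ) ≤ n := Nat.cast_nonneg n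
    linarith
  have h3 : 0 ≤ 1/(3*(x₀ + (n:ℝ) - 1/2)^3) := by
    have := pow_pos h2 3
    positivity
  linarith

lemma tsumtel {x₀ : ℝ} (h : 1/2 < x₀) :
    ∑' k : ℕ, 1/(x₀ + k)^4 ≤ 1/(3*(x₀ - 1/2)^3) := by
  refine Summable.tsum_le_of_sum_range_le (summable_invpow4 h) (fun n => ?_)
  have h1 := tsumtel_partial h n
  have h2 : (0:ℝ) < x₀ + n - 1/2 := by
    have : (0:ℝ) ≤ n := Nat.cast_nonneg n
    linarith
  have h3 : 0 ≤ 1/(3*(x₀ + (n:ℝ) - 1/2)^3) := by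
    have := pow_pos h2 3
    positivity
  linarith



/-- counting: |j - k| as a sum of indicators over ℕ -/
lemma habs_count (j k : ℕ) :
    ENNReal.ofReal |(j:ℝ) - (k:ℝ)| = ∑' t : ℕ,
      ((if j ≤ t ∧ t < k then (1:ℝ≥0∞) else 0) + (if k ≤ t ∧ t < j then (1:ℝ≥0∞) else 0)) := by
  rcases le_total j k with h | h
  · have h2 : ∀ t : ℕ, (if k ≤ t ∧ t < j then (1:ℝ≥0∞) else 0) = 0 := by
      intro t; rw [if_neg]; rintro ⟨h1, h2⟩; omega
    simp only [h2, add_zero]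
    rw [tsum_eq_sum (s := Finset.Ico j k) (fun t ht => by
      rw [if_neg]; intro hc; exact ht (Finset.mem_Ico.2 hc))]
    have : ∀ t ∈ Finset.Ico j k, (if j ≤ t ∧ t < k then (1:ℝ≥0∞) else 0) = 1 := by
      intro t ht; rw [if_pos (Finset.mem_Ico.1 ht)]
    rw [Finset.sum_congr rfl this]
    simp only [Finset.sum_const, Nat.card_Ico, nsmul_eq_mul, mul_one]
    have habs : |(j:ℝ) - (k:ℝ)| = ((k - j : ℕ) : ℝ) := by
      rw [abs_sub_comm, abs_of_nonneg (sub_nonneg.2 (by exact_mod_cast h))]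
      push_cast [Nat.cast_sub h]; ring
    rw [habs, ENNReal.ofReal_natCast]
  · have h2 : ∀ t : ℕ, (if j ≤ t ∧ t < k then (1:ℝ≥0∞) else 0) = 0 := by
      intro t; rw [if_neg]; rintro ⟨h1, h2⟩; omega
    simp only [h2, zero_add]
    rw [tsum_eq_sum (s := Finset.Ico k j) (fun t ht => by
      rw [if_neg]; intro hc; exact ht (Finset.mem_Ico.2 hc))]
    have : ∀ t ∈ Finset.Ico k j, (if k ≤ t ∧ t < j then (1:ℝ≥0∞) else 0) = 1 := by
      intro t ht; rw [if_pos (Finset.mem_Ico.1 ht)]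
    rw [Finset.sum_congr rfl this]
    simp only [Finset.sum_const, Nat.card_Ico, nsmul_eq_mul, mul_one]
    have habs : |(j:ℝ) - (k:ℝ)| = ((j - k : ℕ) : ℝ) := by
      rw [abs_of_nonneg (sub_nonneg.2 (by exact_mod_cast h))]
      push_cast [Nat.cast_sub h]; ring
    rw [habs, ENNReal.ofReal_natCast]

/-- The energy-distance discrete identity, in `ℝ≥0∞`. -/
lemma key_identity (P Q : ℕ → ℝ≥0∞) :
    ∑' j : ℕ, ∑' k : ℕ, P j * Q k * ENNReal.ofReal |(j:ℝ) - (k:ℝ)|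
    = ∑' t : ℕ, ((∑ j ∈ range (t+1), P j) * (∑' k : ℕ, if t < k then Q k else 0)
        + (∑ k ∈ range (t+1), Q k) * (∑' j : ℕ, if t < j then P j else 0)) := by
  have step1 : ∀ j k : ℕ, P j * Q k * ENNReal.ofReal |(j:ℝ) - (k:ℝ)|
      = ∑' t : ℕ, ((if j ≤ t then P j else 0) * (if t < k then Q k else 0)
          + (if k ≤ t then Q k else 0) * (if t < j then P j else 0)) := by
    intro j k
    rw [habs_count, ← ENNReal.tsum_mul_left]
    congr 1
    funext t
    by_cases h1 : j ≤ t <;> by_cases h2 : t < k <;> by_cases h3 : k ≤ t <;> by_cases h4 : t < j <;>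
      simp [h1, h2, h3, h4, mul_add, mul_comm, mul_left_comm] <;> ring
  calc ∑' j : ℕ, ∑' k : ℕ, P j * Q k * ENNReal.ofReal |(j:ℝ) - (k:ℝ)|
      = ∑' j : ℕ, ∑' k : ℕ, ∑' t : ℕ,
        ((if j ≤ t then P j else 0) * (if t < k then Q k else 0)
          + (if k ≤ t then Q k else 0) * (if t < j then P j else 0)) := by
        congr 1; funext j; congr 1; funext k; exact step1 j k
    _ = ∑' j : ℕ, ∑' t : ℕ, ∑' k : ℕ,
        ((if j ≤ t then P j else 0) * (if t < k then Q k else 0)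
          + (if k ≤ t then Q k else 0) * (if t < j then P j else 0)) := by
        congr 1; funext j; exact ENNReal.tsum_comm
    _ = ∑' t : ℕ, ∑' j : ℕ, ∑' k : ℕ,
        ((if j ≤ t then P j else 0) * (if t < k then Q k else 0)
          + (if k ≤ t then Q k else 0) * (if t < j then P j else 0)) := ENNReal.tsum_comm
    _ = ∑' t : ℕ, ((∑ j ∈ range (t+1), P j) * (∑' k : ℕ, if t < k then Q k else 0)
        + (∑ k ∈ range (t+1), Q k) * (∑' j : ℕ, if t < j then P j else 0)) := by
        congr 1; funext t
        rw [show (∑' j : ℕ, ∑' k : ℕ,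
            ((if j ≤ t then P j else 0) * (if t < k then Q k else 0)
            + (if k ≤ t then Q k else 0) * (if t < j then P j else 0)))
          = (∑' j : ℕ, ∑' k : ℕ, (if j ≤ t then P j else 0) * (if t < k then Q k else 0))
            + (∑' j : ℕ, ∑' k : ℕ, (if k ≤ t then Q k else 0) * (if t < j then P j else 0)) by
          rw [← ENNReal.tsum_add]; congr 1; funext j; rw [← ENNReal.tsum_add]]
        congr 1
        · rw [show (∑' j : ℕ, ∑' k : ℕ, (if j ≤ t then P j else 0) * (if t < k then Q k else 0))
            = ∑' j : ℕ, (if j ≤ t then P j else 0) * (∑' k : ℕ, (if t < k then Q k else 0)) by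
            congr 1; funext j; rw [ENNReal.tsum_mul_left]]
          rw [ENNReal.tsum_mul_right]
          congr 1
          rw [tsum_eq_sum (s := range (t+1)) (fun j hj => by
            rw [if_neg]; intro hc; exact hj (Finset.mem_range.2 (Nat.lt_succ_of_le hc)))]
          exact Finset.sum_congr rfl (fun j hj => by
            rw [if_pos (Nat.lt_succ_iff.1 (Finset.mem_range.1 hj))])
        · rw [show (∑' j : ℕ, ∑' k : ℕ, (if k ≤ t then Q k else 0) * (if t < j then P j else 0))
            = ∑' k : ℕ, ∑' j : ℕ, (if k ≤ t then Q k else 0) * (if t < j then P j else 0) from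
            ENNReal.tsum_comm]
          rw [show (∑' k : ℕ, ∑' j : ℕ, (if k ≤ t then Q k else 0) * (if t < j then P j else 0))
            = ∑' k : ℕ, (if k ≤ t then Q k else 0) * (∑' j : ℕ, (if t < j then P j else 0)) by
            congr 1; funext k; rw [ENNReal.tsum_mul_left]]
          rw [ENNReal.tsum_mul_right]
          congr 1
          rw [tsum_eq_sum (s := range (t+1)) (fun k hk => by
            rw [if_neg]; intro hc; exact hk (Finset.mem_range.2 (Nat.lt_succ_of_le hc)))]
          exact Finset.sum_congr rfl (fun k hk => by
            rw [if_pos (Nat.lt_succ_iff.1 (Finset.mem_range.1 hk))])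




lemma tail_indicator {m : ℝ} (hm : 0 ≤ m) (t : ℕ) :
    (∑' j : ℕ, if t < j then ENNReal.ofReal (pois m j) else 0)
      = ENNReal.ofReal (1 - F m t) := by
  set r : ℕ → ℝ := fun j => if t < j then pois m j else 0 with hr
  have h1 : HasSum (fun n : ℕ => r (n + (t+1))) (1 - F m t) := by
    have he : (fun n : ℕ => r (n + (t+1))) = (fun n => pois m (n + (t+1))) := by
      funext n; simp only [hr]; rw [if_pos (by omega)]
    rw [he]; exact one_sub_F m t
  have h2 : ∑ i ∈ range (t+1), r i = 0 :=
    Finset.sum_eq_zero fun i hi => if_neg (by simp only [Finset.mem_range] at hi; omega)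
  have hrs : HasSum r (1 - F m t) := by
    have h3 := (hasSum_nat_add_iff (f := r) (t+1)).1 h1
    rwa [h2, add_zero] at h3
  have hnn : ∀ j, 0 ≤ r j := by
    intro j; simp only [hr]; split_ifs
    · exact pois_nonneg hm j
    · exact le_refl 0
  calc (∑' j : ℕ, if t < j then ENNReal.ofReal (pois m j) else 0)
      = ∑' j : ℕ, ENNReal.ofReal (r j) := by
        congr 1; funext j; simp only [hr]; split_ifs
        · rfl
        · simp
    _ = ENNReal.ofReal (1 - F m t) := by
        rw [← ENNReal.ofReal_tsum_of_nonneg hnn hrs.summable, hrs.tsum_eq]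

noncomputable def uu (m l : ℝ) (t : ℕ) : ℝ := F m t * (1 - F l t) + F l t * (1 - F m t)

lemma uu_nonneg {m l : ℝ} (hm : 0 ≤ m) (hl : 0 ≤ l) (t : ℕ) : 0 ≤ uu m l t :=
  add_nonneg (mul_nonneg (F_nonneg hm t) (one_sub_F_nonneg hl t))
    (mul_nonneg (F_nonneg hl t) (one_sub_F_nonneg hm t))

lemma uu_le {m l : ℝ} (hm : 0 ≤ m) (hl : 0 ≤ l) (t : ℕ) :
    uu m l t ≤ (1 - F l t) + (1 - F m t) := by
  have h1 := F_le_one hm t; have h2 := F_le_one hl t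
  have h3 := F_nonneg hm t; have h4 := F_nonneg hl t
  have h5 := one_sub_F_nonneg hm t; have h6 := one_sub_F_nonneg hl t
  unfold uu; nlinarith

lemma uu_summable {m l : ℝ} (hm : 0 ≤ m) (hl : 0 ≤ l) : Summable (uu m l) :=
  Summable.of_nonneg_of_le (uu_nonneg hm hl) (uu_le hm hl)
    (((hasSum_one_sub_F hl).summable).add ((hasSum_one_sub_F hm).summable))

/-- The double sum in `ℝ≥0∞` equals `ofReal` of the real energy sum. -/
lemma EEabs {m l : ℝ} (hm : 0 ≤ m) (hl : 0 ≤ l) :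
    (∑' j : ℕ, ∑' k : ℕ, ENNReal.ofReal (pois m j) * ENNReal.ofReal (pois l k)
        * ENNReal.ofReal |(j:ℝ) - (k:ℝ)|)
      = ENNReal.ofReal (∑' t : ℕ, uu m l t) := by
  rw [key_identity]
  rw [ENNReal.ofReal_tsum_of_nonneg (uu_nonneg hm hl) (uu_summable hm hl)]
  congr 1; funext t
  rw [tail_indicator hm t, tail_indicator hl t]
  have e1 : (∑ j ∈ range (t+1), ENNReal.ofReal (pois m j)) = ENNReal.ofReal (F m t) := by
    rw [F, ENNReal.ofReal_sum_of_nonneg (fun j _ => pois_nonneg hm j)]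
  have e2 : (∑ k ∈ range (t+1), ENNReal.ofReal (pois l k)) = ENNReal.ofReal (F l t) := by
    rw [F, ENNReal.ofReal_sum_of_nonneg (fun j _ => pois_nonneg hl j)]
  rw [e1, e2, ← ENNReal.ofReal_mul (F_nonneg hm t), ← ENNReal.ofReal_mul (F_nonneg hl t),
    ← ENNReal.ofReal_add (mul_nonneg (F_nonneg hm t) (one_sub_F_nonneg hl t))
      (mul_nonneg (F_nonneg hl t) (one_sub_F_nonneg hm t))]
  rfl

lemma lintegral_poissonReal (m : ℝ) (f : ℝ → ℝ≥0∞) :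
    ∫⁻ x, f x ∂(poissonRealMeasure m) = ∑' k : ℕ, ENNReal.ofReal (pois m k) * f k := by
  rw [poissonRealMeasure, lintegral_sum_measure]
  congr 1; funext k
  rw [lintegral_smul_measure, lintegral_dirac]
  rfl

variable {Ω : Type*} [MeasurableSpace Ω] (μ : Measure Ω) [IsProbabilityMeasure μ]

/-- Bridge: lintegral of |X - Y| for independent Poissons. -/
lemma lintegral_abs_sub {m l : ℝ} (hm : 0 ≤ m) (hl : 0 ≤ l)
    (X Y : Ω → ℝ) (hXm : Measurable X) (hYm : Measurable Y)
    (hindep : IndepFun X Y μ)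
    (hX : Measure.map X μ = poissonRealMeasure m)
    (hY : Measure.map Y μ = poissonRealMeasure l) :
    ∫⁻ ω, ENNReal.ofReal |X ω - Y ω| ∂μ = ENNReal.ofReal (∑' t : ℕ, uu m l t) := by
  have hg : Measurable (fun z : ℝ × ℝ => ENNReal.ofReal |z.1 - z.2|) := by
    measurability
  have hmap := (indepFun_iff_map_prod_eq_prod_map_map hXm.aemeasurable hYm.aemeasurable).1 hindep
  haveI : IsProbabilityMeasure (poissonRealMeasure l) := by
    rw [← hY]; exact Measure.isProbabilityMeasure_map hYm.aemeasurable
  calc ∫⁻ ω, ENNReal.ofReal |X ω - Y ω| ∂μ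
      = ∫⁻ z : ℝ × ℝ, ENNReal.ofReal |z.1 - z.2| ∂(Measure.map (fun ω => (X ω, Y ω)) μ) := by
        rw [lintegral_map hg (hXm.prodMk hYm)]
    _ = ∫⁻ z : ℝ × ℝ, ENNReal.ofReal |z.1 - z.2|
          ∂((poissonRealMeasure m).prod (poissonRealMeasure l)) := by
        rw [hmap, hX, hY]
    _ = ∫⁻ x : ℝ, ∫⁻ y : ℝ, ENNReal.ofReal |x - y| ∂(poissonRealMeasure l)
          ∂(poissonRealMeasure m) := lintegral_prod _ hg.aemeasurable
    _ = ∑' j : ℕ, ENNReal.ofReal (pois m j)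
          * ∫⁻ y : ℝ, ENNReal.ofReal |(j:ℝ) - y| ∂(poissonRealMeasure l) :=
        lintegral_poissonReal m _
    _ = ∑' j : ℕ, ∑' k : ℕ, ENNReal.ofReal (pois m j) * (ENNReal.ofReal (pois l k)
          * ENNReal.ofReal |(j:ℝ) - (k:ℝ)|) := by
        congr 1; funext j
        rw [lintegral_poissonReal l, ← ENNReal.tsum_mul_left]
    _ = ENNReal.ofReal (∑' t : ℕ, uu m l t) := by
        rw [← EEabs hm hl]
        congr 1; funext j; congr 1; funext k; ring

/-- expectation of |X - Y| -/
lemma integral_abs_sub {m l : ℝ} (hm : 0 ≤ m) (hl : 0 ≤ l)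
    (X Y : Ω → ℝ) (hXm : Measurable X) (hYm : Measurable Y)
    (hindep : IndepFun X Y μ)
    (hX : Measure.map X μ = poissonRealMeasure m)
    (hY : Measure.map Y μ = poissonRealMeasure l) :
    ∫ ω, |X ω - Y ω| ∂μ = ∑' t : ℕ, uu m l t := by
  have hmeas : AEStronglyMeasurable (fun ω => |X ω - Y ω|) μ :=
    ((hXm.sub hYm).abs).aestronglyMeasurable
  rw [integral_eq_lintegral_of_nonneg_ae (Filter.Eventually.of_forall fun ω => abs_nonneg _) hmeas]
  rw [lintegral_abs_sub μ hm hl X Y hXm hYm hindep hX hY]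
  rw [ENNReal.toReal_ofReal]
  exact tsum_nonneg fun t => uu_nonneg hm hl t

/-- integrability of |X - Y| -/
lemma integrable_abs_sub {m l : ℝ} (hm : 0 ≤ m) (hl : 0 ≤ l)
    (X Y : Ω → ℝ) (hXm : Measurable X) (hYm : Measurable Y)
    (hindep : IndepFun X Y μ)
    (hX : Measure.map X μ = poissonRealMeasure m)
    (hY : Measure.map Y μ = poissonRealMeasure l) :
    Integrable (fun ω => |X ω - Y ω|) μ := by
  constructor
  · exact ((hXm.sub hYm).abs).aestronglyMeasurable
  · rw [hasFiniteIntegral_iff_ofReal (Filter.Eventually.of_forall fun ω => abs_nonneg _)]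
    rw [lintegral_abs_sub μ hm hl X Y hXm hYm hindep hX hY]
    exact ENNReal.ofReal_lt_top




lemma inv_cube_mono {x y : ℝ} (hx : 0 < x) (hxy : x ≤ y) : 1/(3*y^3) ≤ 1/(3*x^3) := by
  have h1 : x^3 ≤ y^3 := pow_le_pow_left₀ hx.le hxy 3
  have h3 : (0:ℝ) < 3*x^3 := by positivity
  apply one_div_le_one_div_of_le h3
  nlinarith

lemma M_nonneg {m : ℝ} (hm : 0 ≤ m) : 0 ≤ m + 3*m^2 := by nlinarith

lemma tailL_bound {m l : ℝ} (hm : 0 ≤ m) (hl : 0 ≤ l) (hml : m ≤ l) {a : ℝ} (ha : 3 ≤ a) :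
    ∑ t ∈ range (Nat.ceil (m - a)), |F m t - F l t|
      ≤ (m+3*m^2) * (1/(3*(a-1/2)^3)) + (l+3*l^2) * (1/(3*(a+(l-m)-1/2)^3)) := by
  have hd0 : 0 ≤ l - m := by linarith
  have hc1 : (0:ℝ) < a - 1/2 := by linarith
  have hc2 : (0:ℝ) < a + (l-m) - 1/2 := by linarith
  by_cases h0 : Nat.ceil (m - a) = 0
  · rw [h0]
    have r1 : (0:ℝ) ≤ 1/(3*(a-1/2)^3) := by positivity
    have r2 : (0:ℝ) ≤ 1/(3*(a+(l-m)-1/2)^3) := by positivity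
    simp only [range_zero, Finset.sum_empty]
    have := M_nonneg hm; have := M_nonneg hl
    nlinarith
  · have hpos : 0 < m - a := Nat.ceil_pos.1 (Nat.pos_of_ne_zero h0)
    set n1 := Nat.ceil (m - a) with hn1def
    have hn1 : (n1:ℝ) < (m - a) + 1 := Nat.ceil_lt_add_one hpos.le
    have hterm : ∀ t ∈ range n1, |F m t - F l t|
        ≤ (m+3*m^2) * (1/(m - t)^4) + (l+3*l^2) * (1/(l - t)^4) := by
      intro t ht
      have ht' : (t:ℝ) < m - a := by
        have h1 : t + 1 ≤ n1 := Finset.mem_range.1 ht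
        have h2 : ((t:ℝ) + 1) ≤ (n1:ℝ) := by exact_mod_cast h1
        linarith
      have hmt : 0 < m - t := by linarith
      have hlt : 0 < l - t := by linarith
      have c1 := cheb_left hm t (m - t) hmt (by linarith)
      have c2 := cheb_left hl t (l - t) hlt (by linarith)
      rw [div_eq_mul_one_div] at c1 c2
      have habs : |F m t - F l t| ≤ F m t + F l t :=
        abs_le.2 ⟨by linarith [F_nonneg hm t, F_nonneg hl t],
          by linarith [F_nonneg hm t, F_nonneg hl t]⟩
      linarith
    calc ∑ t ∈ range n1, |F m t - F l t|
        ≤ ∑ t ∈ range n1, ((m+3*m^2) * (1/(m - t)^4) + (l+3*l^2) * (1/(l - t)^4)) :=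
          Finset.sum_le_sum hterm
      _ = (m+3*m^2) * (∑ t ∈ range n1, 1/(m - t)^4)
          + (l+3*l^2) * (∑ t ∈ range n1, 1/(l - t)^4) := by
          rw [Finset.sum_add_distrib, Finset.mul_sum, Finset.mul_sum]
      _ ≤ (m+3*m^2) * (1/(3*(a-1/2)^3)) + (l+3*l^2) * (1/(3*(a+(l-m)-1/2)^3)) := by
          have s1 : ∑ t ∈ range n1, 1/(m - t)^4 ≤ 1/(3*(m - n1 + 1/2)^3) :=
            sumtel hm n1 (by linarith)
          have s2 : ∑ t ∈ range n1, 1/(l - t)^4 ≤ 1/(3*(l - n1 + 1/2)^3) :=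
            sumtel hl n1 (by linarith)
          have m1 : 1/(3*(m - n1 + 1/2)^3) ≤ 1/(3*(a-1/2)^3) := by
            have : a - 1/2 ≤ m - n1 + 1/2 := by linarith
            exact inv_cube_mono hc1 this
          have m2 : 1/(3*(l - n1 + 1/2)^3) ≤ 1/(3*(a+(l-m)-1/2)^3) := by
            have : a + (l-m) - 1/2 ≤ l - n1 + 1/2 := by linarith
            exact inv_cube_mono hc2 this
          have := M_nonneg hm; have := M_nonneg hl
          have q1 : (m+3*m^2) * (∑ t ∈ range n1, 1/(m - t)^4)
              ≤ (m+3*m^2) * (1/(3*(a-1/2)^3)) :=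
            mul_le_mul_of_nonneg_left (s1.trans m1) (by assumption)
          have q2 : (l+3*l^2) * (∑ t ∈ range n1, 1/(l - t)^4)
              ≤ (l+3*l^2) * (1/(3*(a+(l-m)-1/2)^3)) :=
            mul_le_mul_of_nonneg_left (s2.trans m2) (by assumption)
          linarith

lemma tailR_bound {m l : ℝ} (hm : 0 ≤ m) (hl : 0 ≤ l) (hml : m ≤ l) {a : ℝ} (ha : 3 ≤ a) :
    Summable (fun k : ℕ => |F m (k + (Nat.floor (l + a) + 1)) - F l (k + (Nat.floor (l + a) + 1))|)
    ∧ ∑' k : ℕ, |F m (k + (Nat.floor (l + a) + 1)) - F l (k + (Nat.floor (l + a) + 1))|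
      ≤ (l+3*l^2) * (1/(3*(a-1/2)^3)) + (m+3*m^2) * (1/(3*(a+(l-m)-1/2)^3)) := by
  set n2 : ℕ := Nat.floor (l + a) + 1 with hn2def
  have hn2 : l + a < (n2:ℕ) := by
    have := Nat.lt_floor_add_one (l + a)
    rw [hn2def]
    push_cast
    push_cast at this
    linarith
  set xl : ℝ := (n2:ℝ) - l with hxl
  set xm : ℝ := (n2:ℝ) - m with hxm
  have hxl0 : 1/2 < xl := by simp only [hxl]; linarith
  have hxm0 : 1/2 < xm := by simp only [hxm]; linarith
  have hd0 : 0 ≤ l - m := by linarith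
  have key : ∀ k : ℕ, |F m (k + n2) - F l (k + n2)|
      ≤ (m+3*m^2) * (1/(xm + k)^4) + (l+3*l^2) * (1/(xl + k)^4) := by
    intro k
    have hcast : ((k + n2 : ℕ):ℝ) = (k:ℝ) + (n2:ℝ) := by push_cast; ring
    have hm1 : 0 < xm + k := by have : (0:ℝ) ≤ k := Nat.cast_nonneg k; linarith
    have hl1 : 0 < xl + k := by have : (0:ℝ) ≤ k := Nat.cast_nonneg k; linarith
    have c1 : 1 - F m (k + n2) ≤ (m + 3*m^2) / (xm + k)^4 := by
      refine cheb_right hm (k + n2) (xm + k) hm1 ?_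
      rw [hcast]; simp only [hxm]; linarith
    have c2 : 1 - F l (k + n2) ≤ (l + 3*l^2) / (xl + k)^4 := by
      refine cheb_right hl (k + n2) (xl + k) hl1 ?_
      rw [hcast]; simp only [hxl]; linarith
    rw [div_eq_mul_one_div] at c1 c2
    have habs : |F m (k + n2) - F l (k + n2)|
        ≤ (1 - F m (k + n2)) + (1 - F l (k + n2)) :=
      abs_le.2 ⟨(by linarith [F_nonneg hm (k+n2), F_le_one hl (k+n2), F_le_one hm (k+n2), F_nonneg hl (k+n2)]), (by linarith [F_nonneg hm (k+n2), F_le_one hl (k+n2), F_le_one hm (k+n2), F_nonneg hl (k+n2)])⟩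
    linarith
  have Sg : Summable (fun k : ℕ => (m+3*m^2) * (1/(xm + k)^4) + (l+3*l^2) * (1/(xl + k)^4)) :=
    ((summable_invpow4 hxm0).mul_left _).add ((summable_invpow4 hxl0).mul_left _)
  have Sh : Summable (fun k : ℕ => |F m (k + n2) - F l (k + n2)|) :=
    Summable.of_nonneg_of_le (fun k => abs_nonneg _) key Sg
  refine ⟨Sh, ?_⟩
  have step1 : ∑' k : ℕ, |F m (k + n2) - F l (k + n2)|
      ≤ ∑' k : ℕ, ((m+3*m^2) * (1/(xm + k)^4) + (l+3*l^2) * (1/(xl + k)^4)) :=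
    Summable.tsum_le_tsum key Sh Sg
  have step2 : ∑' k : ℕ, ((m+3*m^2) * (1/(xm + k)^4) + (l+3*l^2) * (1/(xl + k)^4))
      = (m+3*m^2) * (∑' k : ℕ, 1/(xm + k)^4) + (l+3*l^2) * (∑' k : ℕ, 1/(xl + k)^4) := by
    rw [Summable.tsum_add ((summable_invpow4 hxm0).mul_left _) ((summable_invpow4 hxl0).mul_left _),
      tsum_mul_left, tsum_mul_left]
  have b1 : ∑' k : ℕ, 1/(xm + k)^4 ≤ 1/(3*(a+(l-m)-1/2)^3) := by
    refine (tsumtel hxm0).trans ?_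
    refine inv_cube_mono (by linarith) ?_
    simp only [hxm]; linarith
  have b2 : ∑' k : ℕ, 1/(xl + k)^4 ≤ 1/(3*(a-1/2)^3) := by
    refine (tsumtel hxl0).trans ?_
    refine inv_cube_mono (by linarith) ?_
    simp only [hxl]; linarith
  have := M_nonneg hm; have := M_nonneg hl
  have q1 : (m+3*m^2) * (∑' k : ℕ, 1/(xm + k)^4) ≤ (m+3*m^2) * (1/(3*(a+(l-m)-1/2)^3)) :=
    mul_le_mul_of_nonneg_left b1 (by assumption)
  have q2 : (l+3*l^2) * (∑' k : ℕ, 1/(xl + k)^4) ≤ (l+3*l^2) * (1/(3*(a-1/2)^3)) :=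
    mul_le_mul_of_nonneg_left b2 (by assumption)
  rw [step2] at step1
  linarith




lemma hasSum_H {m l : ℝ} (hm : 0 ≤ m) (hl : 0 ≤ l) :
    HasSum (fun t => F m t - F l t) (l - m) := by
  have h := (hasSum_one_sub_F hl).sub (hasSum_one_sub_F hm)
  convert h using 2 with t
  · rfl
  ring

lemma abs_H_le {m l : ℝ} (hm : 0 ≤ m) (hl : 0 ≤ l) (t : ℕ) :
    |F m t - F l t| ≤ (1 - F m t) + (1 - F l t) :=
  abs_le.2 ⟨(by linarith [F_nonneg hm t, F_le_one hl t, F_le_one hm t, F_nonneg hl t]), (by linarith [F_nonneg hm t, F_le_one hl t, F_le_one hm t, F_nonneg hl t])⟩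

lemma summable_absH {m l : ℝ} (hm : 0 ≤ m) (hl : 0 ≤ l) :
    Summable (fun t => |F m t - F l t|) :=
  Summable.of_nonneg_of_le (fun t => abs_nonneg _) (abs_H_le hm hl)
    ((hasSum_one_sub_F hm).summable.add (hasSum_one_sub_F hl).summable)

lemma summable_Hsq {m l : ℝ} (hm : 0 ≤ m) (hl : 0 ≤ l) :
    Summable (fun t => (F m t - F l t)^2) := by
  refine Summable.of_nonneg_of_le (fun t => sq_nonneg _) (fun t => ?_) (summable_absH hm hl)
  have h1 : |F m t - F l t| ≤ 1 := by
    have := abs_H_le hm hl t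
    have := F_nonneg hm t; have := F_nonneg hl t
    have := F_le_one hm t; have := F_le_one hl t
    have : |F m t - F l t| ≤ (1 - F m t) + (1 - F l t) := abs_H_le hm hl t
    rw [abs_le]; constructor <;> linarith [abs_nonneg (F m t - F l t)]
  calc (F m t - F l t)^2 = |F m t - F l t|^2 := (sq_abs _).symm
    _ = |F m t - F l t| * |F m t - F l t| := sq (|F m t - F l t|) ▸ by ring
    _ ≤ |F m t - F l t| * 1 := mul_le_mul_of_nonneg_left h1 (abs_nonneg _)
    _ = |F m t - F l t| := mul_one _

/-- main chain: lower bound for the energy sum via Cauchy-Schwarz on a window -/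
lemma chain {m l : ℝ} (hm : 0 ≤ m) (hl : 0 ≤ l) (hml : m ≤ l) {a : ℝ} (ha : 3 ≤ a)
    (B : ℝ)
    (hB1 : ∑ t ∈ range (Nat.ceil (m - a)), |F m t - F l t|
      + ∑' k : ℕ, |F m (k + (Nat.floor (l + a) + 1)) - F l (k + (Nat.floor (l + a) + 1))| ≤ B)
    (hB2 : B ≤ l - m) :
    (l - m - B)^2 ≤ ((l - m) + 2*a + 1) * ∑' t : ℕ, (F m t - F l t)^2 := by
  set H : ℕ → ℝ := fun t => F m t - F l t with hH
  set n1 : ℕ := Nat.ceil (m - a) with hn1def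
  set n2 : ℕ := Nat.floor (l + a) + 1 with hn2def
  have hd0 : 0 ≤ l - m := by linarith
  have hn2 : l + a < (n2:ℝ) := by
    have := Nat.lt_floor_add_one (l + a)
    rw [hn2def]
    push_cast; push_cast at this; linarith
  have hn2' : (n2:ℝ) ≤ l + a + 1 := by
    have := Nat.floor_le (show (0:ℝ) ≤ l + a by linarith)
    rw [hn2def]
    push_cast; linarith
  have hn1up : (n1:ℝ) < m - a + 1 ∨ n1 = 0 := by
    by_cases h0 : n1 = 0
    · exact Or.inr h0
    · left
      exact Nat.ceil_lt_add_one (le_of_lt (Nat.ceil_pos.1 (Nat.pos_of_ne_zero h0)))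
  have hn1le : n1 ≤ n2 := by
    rcases hn1up with h | h
    · have : (n1:ℝ) < (n2:ℝ) := by linarith
      exact le_of_lt (Nat.cast_lt.1 this)
    · rw [h]; exact Nat.zero_le _
  have hn1ge : m - a ≤ (n1:ℝ) := Nat.le_ceil _
  -- summability
  have hsumH : Summable H := (hasSum_H hm hl).summable
  have htsumH : ∑' t, H t = l - m := (hasSum_H hm hl).tsum_eq
  have habsH : Summable (fun t => |H t|) := summable_absH hm hl
  have hHsq : Summable (fun t => H t^2) := summable_Hsq hm hl
  -- split
  have hsplit : ∑ t ∈ range n2, H t + ∑' k : ℕ, H (k + n2) = l - m := by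
    rw [← htsumH]; exact Summable.sum_add_tsum_nat_add n2 hsumH
  have hsplit2 : ∑ t ∈ range n2, H t
      = ∑ t ∈ range n1, H t + ∑ t ∈ Ico n1 n2, H t := by
    rw [Finset.range_eq_Ico, Finset.range_eq_Ico]
    exact (Finset.sum_Ico_consecutive _ (Nat.zero_le n1) hn1le).symm
  -- bound the two error terms
  have e1 : |∑ t ∈ range n1, H t| ≤ ∑ t ∈ range n1, |H t| := Finset.abs_sum_le_sum_abs _ _
  have habs_shift : Summable (fun k : ℕ => |H (k + n2)|) := by
    have := (summable_nat_add_iff (f := fun t => |H t|) n2).2 habsH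
    exact this
  have e2 : |∑' k : ℕ, H (k + n2)| ≤ ∑' k : ℕ, |H (k + n2)| := by
    have h := norm_tsum_le_tsum_norm (f := fun k : ℕ => H (k + n2)) (by
      simpa [Real.norm_eq_abs] using habs_shift)
    simpa [Real.norm_eq_abs] using h
  -- window sum lower bound
  have hwin : l - m - B ≤ ∑ t ∈ Ico n1 n2, H t := by
    have h1 : ∑ t ∈ Ico n1 n2, H t
        = (l - m) - ∑ t ∈ range n1, H t - ∑' k : ℕ, H (k + n2) := by
      rw [← hsplit, hsplit2]; ring
    rw [h1]
    have h2 : ∑ t ∈ range n1, H t ≤ ∑ t ∈ range n1, |H t| := le_trans (le_abs_self _) e1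
    have h3 : ∑' k : ℕ, H (k + n2) ≤ ∑' k : ℕ, |H (k + n2)| := le_trans (le_abs_self _) e2
    linarith
  -- Cauchy-Schwarz
  have hCS : (∑ t ∈ Ico n1 n2, H t)^2
      ≤ ((Ico n1 n2).card : ℝ) * ∑ t ∈ Ico n1 n2, H t^2 := by
    have := Finset.sum_mul_sq_le_sq_mul_sq (Ico n1 n2) (fun _ => (1:ℝ)) H
    simpa using this
  have hcard : ((Ico n1 n2).card : ℝ) ≤ (l - m) + 2*a + 1 := by
    rw [Nat.card_Ico]
    have : ((n2 - n1 : ℕ) : ℝ) = (n2:ℝ) - (n1:ℝ) := by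
      rw [Nat.cast_sub hn1le]
    rw [this]
    linarith
  have hsq_le : ∑ t ∈ Ico n1 n2, H t^2 ≤ ∑' t : ℕ, H t^2 :=
    Summable.sum_le_tsum _ (fun t _ => sq_nonneg _) hHsq
  have htsumsq_nonneg : 0 ≤ ∑' t : ℕ, H t^2 := tsum_nonneg fun t => sq_nonneg _
  have hBnn : 0 ≤ l - m - B := by linarith
  calc (l - m - B)^2 ≤ (∑ t ∈ Ico n1 n2, H t)^2 := by
        have := pow_le_pow_left₀ hBnn hwin 2
        exact this
    _ ≤ ((Ico n1 n2).card : ℝ) * ∑ t ∈ Ico n1 n2, H t^2 := hCS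
    _ ≤ ((Ico n1 n2).card : ℝ) * ∑' t : ℕ, H t^2 :=
        mul_le_mul_of_nonneg_left hsq_le (Nat.cast_nonneg _)
    _ ≤ ((l - m) + 2*a + 1) * ∑' t : ℕ, H t^2 :=
        mul_le_mul_of_nonneg_right hcard htsumsq_nonneg




lemma inv_cube_mono' {x y : ℝ} (hx : 0 < x) (hxy : x ≤ y) : 1/(3*y^3) ≤ 1/(3*x^3) := by
  have h1 : x^3 ≤ y^3 := pow_le_pow_left₀ hx.le hxy 3
  have h3 : (0:ℝ) < 3*x^3 := by positivity
  apply one_div_le_one_div_of_le h3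
  nlinarith

/-- case A numeric verification -/
lemma numA (m l d B : ℝ) (hm : 0 ≤ m) (hml : m ≤ l) (hd : d = l - m) (hs1 : 1 < l + m)
    (hs2 : l + m ≤ 8/5) (hdsq : l + m ≤ d^2) (hd1 : 1 ≤ d) (hB0 : 0 ≤ B)
    (hB : B ≤ (l+3*l^2) * (8/375) + (m+3*m^2) * (8/1029)) :
    d * (d + 2*3 + 1) ≤ 10 * (d - B)^2 := by
  nlinarith [sq_nonneg (d - 1), sq_nonneg B, mul_nonneg hB0 (sub_nonneg.2 hd1),
    sq_nonneg (l - m), mul_nonneg hm (le_trans hm hml), sq_nonneg (d - B)]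

/-- case B numeric verification -/
lemma numB (d σ B : ℝ) (hσ : 12649/10000 ≤ σ) (hdσ : σ ≤ d) (hB0 : 0 ≤ B)
    (hB : B ≤ (19/200)*σ) :
    d * (d + 2*(3*σ) + 1) ≤ 10 * (d - B)^2 := by
  nlinarith [mul_le_mul_of_nonneg_left hB (show (0:ℝ) ≤ d by linarith),
    mul_le_mul_of_nonneg_left hdσ (show (0:ℝ) ≤ d by linarith),
    sq_nonneg B, mul_le_mul_of_nonneg_left hσ (show (0:ℝ) ≤ d by linarith)]

/-- σ lower bound -/
lemma sigma_lb (σ : ℝ) (h0 : 0 ≤ σ) (h : 8/5 ≤ σ^2) : 12649/10000 ≤ σ := by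
  nlinarith

/-- case B tail-bound estimate -/
lemma Bbound (m l σ d : ℝ) (hm : 0 ≤ m) (hml : m ≤ l) (hσ0 : 0 < σ) (hσ2 : σ^2 = l + m)
    (hs : 8/5 ≤ l + m) (hσd : σ ≤ d) (hd : d = l - m) :
    (m+3*m^2) * (1/(3*(3*σ-1/2)^3)) + (l+3*l^2) * (1/(3*(3*σ+d-1/2)^3))
    + ((l+3*l^2) * (1/(3*(3*σ-1/2)^3)) + (m+3*m^2) * (1/(3*(3*σ+d-1/2)^3)))
    ≤ (19/200)*σ := by
  have hσ1 : 12649/10000 ≤ σ := sigma_lb σ hσ0.le (by linarith)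
  have hM : 0 ≤ (m+3*m^2) + (l+3*l^2) := by nlinarith
  have hφ1 : 1/(3*(3*σ-1/2)^3) ≤ 125/(6591*σ^3) := by
    have h1 : (13/5)*σ ≤ 3*σ - 1/2 := by linarith
    have h2 := inv_cube_mono' (show (0:ℝ) < (13/5)*σ by linarith) h1
    have h3 : 1/(3*((13/5)*σ)^3) = 125/(6591*σ^3) := by
      field_simp; ring
    linarith [h2, h3.symm.le, h3.le]
  have hφ2 : 1/(3*(3*σ+d-1/2)^3) ≤ 125/(17496*σ^3) := by
    have h1 : (18/5)*σ ≤ 3*σ + d - 1/2 := by linarith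
    have h2 := inv_cube_mono' (show (0:ℝ) < (18/5)*σ by linarith) h1
    have h3 : 1/(3*((18/5)*σ)^3) = 125/(17496*σ^3) := by
      field_simp; ring
    linarith [h2, h3.le]
  have hMle : (m+3*m^2) + (l+3*l^2) ≤ σ^2 + 3*σ^4 := by nlinarith
  have hφpos1 : 0 ≤ 1/(3*(3*σ-1/2)^3) := by
    have : (0:ℝ) < 3*σ - 1/2 := by linarith
    positivity
  have hφpos2 : 0 ≤ 1/(3*(3*σ+d-1/2)^3) := by
    have : (0:ℝ) < 3*σ + d - 1/2 := by linarith
    positivity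
  -- B = M * (φ1 + φ2)
  have key : ((m+3*m^2) + (l+3*l^2)) * (1/(3*(3*σ-1/2)^3) + 1/(3*(3*σ+d-1/2)^3))
      ≤ (σ^2 + 3*σ^4) * (125/(6591*σ^3) + 125/(17496*σ^3)) := by
    refine mul_le_mul hMle (by linarith) (by linarith) (by nlinarith)
  have final : (σ^2 + 3*σ^4) * (125/(6591*σ^3) + 125/(17496*σ^3)) ≤ (19/200)*σ := by
    have e : (σ^2 + 3*σ^4) * (125/(6591*σ^3) + 125/(17496*σ^3))
        = (1003625/38438712)*(1/σ + 3*σ) := by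
      field_simp; ring
    rw [e]
    have hinv : 1/σ ≤ (5/8)*σ := by
      rw [div_le_iff₀ hσ0]
      nlinarith
    nlinarith [hinv]
  have e2 : (m+3*m^2) * (1/(3*(3*σ-1/2)^3)) + (l+3*l^2) * (1/(3*(3*σ+d-1/2)^3))
      + ((l+3*l^2) * (1/(3*(3*σ-1/2)^3)) + (m+3*m^2) * (1/(3*(3*σ+d-1/2)^3)))
      = ((m+3*m^2) + (l+3*l^2)) * (1/(3*(3*σ-1/2)^3) + 1/(3*(3*σ+d-1/2)^3)) := by ring
  rw [e2]
  exact key.trans final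





lemma sum_side {m l : ℝ} (hm : 0 ≤ m) (hl : 0 ≤ l) (hml : m ≤ l) (hs : 1 < l + m)
    (hd : Real.sqrt (l + m) ≤ l - m) :
    (1/5) * (l - m) ≤ ∑' t : ℕ, 2*(F m t - F l t)^2 := by
  set σ := Real.sqrt (l + m) with hσdef
  set d := l - m with hddef
  set S := ∑' t : ℕ, (F m t - F l t)^2 with hSdef
  have hS2 : ∑' t : ℕ, 2*(F m t - F l t)^2 = 2 * S := by
    rw [hSdef, tsum_mul_left]
  have hSnn : 0 ≤ S := tsum_nonneg fun t => sq_nonneg _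
  have hσ0 : 0 < σ := Real.sqrt_pos.2 (by linarith)
  have hσ2 : σ^2 = l + m := Real.sq_sqrt (by linarith)
  have hd0 : 0 < d := lt_of_lt_of_le hσ0 hd
  have hσ1 : 1 < σ := by nlinarith
  have hd1 : 1 ≤ d := by linarith
  have hdsq : l + m ≤ d^2 := by nlinarith
  clear_value σ d S
  rw [hS2]
  rcases le_or_gt (l + m) (8/5) with hsA | hsB
  · -- case A : a = 3
    have hm45 : m ≤ 4/5 := by linarith
    have hTL0 : Nat.ceil (m - (3:ℝ)) = 0 := Nat.ceil_eq_zero.2 (by linarith)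
    obtain ⟨hTRs, hTR⟩ := tailR_bound hm hl hml (a := 3) le_rfl
    set B : ℝ := (l+3*l^2) * (8/375) + (m+3*m^2) * (8/1029) with hBdef
    have hB0 : 0 ≤ B := by
      have := M_nonneg hm; have := M_nonneg hl
      rw [hBdef]; nlinarith
    have hTR' : ∑' k : ℕ, |F m (k + (Nat.floor (l + (3:ℝ)) + 1)) - F l (k + (Nat.floor (l + (3:ℝ)) + 1))| ≤ B := by
      refine hTR.trans ?_
      have e1 : 1/(3*((3:ℝ)-1/2)^3) = 8/375 := by norm_num
      have e2 : 1/(3*((3:ℝ)+(l-m)-1/2)^3) ≤ 8/1029 := by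
        have h1 : (7/2 : ℝ) ≤ 3+(l-m)-1/2 := by linarith
        have h2 := inv_cube_mono' (show (0:ℝ) < 7/2 by norm_num) h1
        have e3 : 1/(3*((7/2):ℝ)^3) = 8/1029 := by norm_num
        linarith
      have := M_nonneg hm; have := M_nonneg hl
      rw [hBdef, e1]
      nlinarith [mul_le_mul_of_nonneg_left e2 (M_nonneg hm)]
    have hB1 : ∑ t ∈ range (Nat.ceil (m - (3:ℝ))), |F m t - F l t|
        + ∑' k : ℕ, |F m (k + (Nat.floor (l + (3:ℝ)) + 1)) - F l (k + (Nat.floor (l + (3:ℝ)) + 1))| ≤ B := by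
      rw [hTL0]
      simpa using hTR'
    have hB2 : B ≤ l - m := by
      rw [hBdef]
      have hl85 : l ≤ 8/5 := by linarith
      have hd1' : 1 ≤ l - m := by rw [← hddef]; exact hd1
      nlinarith
    clear_value B
    have hch := chain hm hl hml (a := 3) le_rfl B hB1 hB2
    rw [← hddef, ← hSdef] at hch
    have hnum := numA m l d B hm hml hddef hs hsA hdsq hd1 hB0 (le_of_eq hBdef)
    have hfin : d * (d + 2*3 + 1) ≤ (10 * S) * (d + 2*3 + 1) := by
      linarith only [hnum, hch]
    have hd7 : (0:ℝ) < d + 2*3 + 1 := by linarith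
    have := le_of_mul_le_mul_right hfin hd7
    linarith
  · -- case B : a = 3σ
    have hσ158 : 8/5 ≤ σ^2 := by linarith
    have hσlb : 12649/10000 ≤ σ := sigma_lb σ hσ0.le hσ158
    have ha : (3:ℝ) ≤ 3*σ := by linarith
    obtain ⟨hTRs, hTR⟩ := tailR_bound hm hl hml (a := 3*σ) ha
    have hTL := tailL_bound hm hl hml (a := 3*σ) ha
    set B : ℝ := (m+3*m^2) * (1/(3*(3*σ-1/2)^3)) + (l+3*l^2) * (1/(3*(3*σ+(l-m)-1/2)^3))
      + ((l+3*l^2) * (1/(3*(3*σ-1/2)^3)) + (m+3*m^2) * (1/(3*(3*σ+(l-m)-1/2)^3))) with hBdef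
    have hB1 : ∑ t ∈ range (Nat.ceil (m - 3*σ)), |F m t - F l t|
        + ∑' k : ℕ, |F m (k + (Nat.floor (l + 3*σ) + 1)) - F l (k + (Nat.floor (l + 3*σ) + 1))| ≤ B := by
      rw [hBdef]; linarith only [hTL, hTR]
    have hBb : B ≤ (19/200)*σ := by
      have hb := Bbound m l σ (l-m) hm hml hσ0 hσ2 hsB.le
        (show σ ≤ l - m by rw [← hddef]; exact hd) rfl
      rw [hBdef]
      exact hb
    have hB0 : 0 ≤ B := by
      rw [hBdef]
      have hp1 : (0:ℝ) ≤ 1/(3*(3*σ-1/2)^3) := by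
        have h1 : (0:ℝ) < 3*σ-1/2 := by linarith
        positivity
      have hp2 : (0:ℝ) ≤ 1/(3*(3*σ+(l-m)-1/2)^3) := by
        have h1 : (0:ℝ) < 3*σ+(l-m)-1/2 := by linarith
        positivity
      have := M_nonneg hm; have := M_nonneg hl
      nlinarith
    clear_value B
    have hB2 : B ≤ l - m := by
      have h1 : (19/200)*σ ≤ σ := by linarith
      have h2 : σ ≤ l - m := by rw [← hddef]; exact hd
      exact hBb.trans (h1.trans h2)
    have hch := chain hm hl hml (a := 3*σ) ha B hB1 hB2
    rw [← hddef, ← hSdef] at hch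
    have hnum := numB d σ B hσlb hd hB0 hBb
    have hfin : d * (d + 2*(3*σ) + 1) ≤ (10 * S) * (d + 2*(3*σ) + 1) := by
      linarith only [hnum, hch]
    have hd7 : (0:ℝ) < d + 2*(3*σ) + 1 := by linarith
    have := le_of_mul_le_mul_right hfin hd7
    linarith


open MeasureTheory ProbabilityTheory in
lemma main_core {Ω : Type*} [MeasurableSpace Ω] (μ : Measure Ω) [IsProbabilityMeasure μ]
    {m l : ℝ} (hm : 0 ≤ m) (hl : 0 ≤ l) (hml : m ≤ l) (hs : 1 < l + m)
    (hdiff : Real.sqrt (l + m) ≤ l - m)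
    (X X' Y Y' : Ω → ℝ) (hXm : Measurable X) (hX'm : Measurable X') (hYm : Measurable Y)
    (hY'm : Measurable Y')
    (iXY : IndepFun X Y μ) (iX'Y' : IndepFun X' Y' μ) (iXX' : IndepFun X X' μ)
    (iYY' : IndepFun Y Y' μ)
    (hX : Measure.map X μ = poissonRealMeasure m) (hX' : Measure.map X' μ = poissonRealMeasure m)
    (hY : Measure.map Y μ = poissonRealMeasure l) (hY' : Measure.map Y' μ = poissonRealMeasure l) :
    (1/5) * (l - m) ≤ ∫ ω, (|X ω - Y ω| + |X' ω - Y' ω| - |X ω - X' ω| - |Y ω - Y' ω|) ∂μ := by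
  have E1 := integral_abs_sub μ hm hl X Y hXm hYm iXY hX hY
  have E2 := integral_abs_sub μ hm hl X' Y' hX'm hY'm iX'Y' hX' hY'
  have E3 := integral_abs_sub μ hm hm X X' hXm hX'm iXX' hX hX'
  have E4 := integral_abs_sub μ hl hl Y Y' hYm hY'm iYY' hY hY'
  have i1 := integrable_abs_sub μ hm hl X Y hXm hYm iXY hX hY
  have i2 := integrable_abs_sub μ hm hl X' Y' hX'm hY'm iX'Y' hX' hY'
  have i3 := integrable_abs_sub μ hm hm X X' hXm hX'm iXX' hX hX'
  have i4 := integrable_abs_sub μ hl hl Y Y' hYm hY'm iYY' hY hY'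
  have i12 : Integrable (fun ω => |X ω - Y ω| + |X' ω - Y' ω|) μ := i1.add i2
  have i123 : Integrable (fun ω => |X ω - Y ω| + |X' ω - Y' ω| - |X ω - X' ω|) μ := i12.sub i3
  rw [integral_sub i123 i4, integral_sub i12 i3, integral_add i1 i2, E1, E2, E3, E4]
  have hcomb : ∑' t : ℕ, uu m l t + ∑' t : ℕ, uu m l t - ∑' t : ℕ, uu m m t - ∑' t : ℕ, uu l l t
      = ∑' t : ℕ, 2*(F m t - F l t)^2 := by
    have s1 := uu_summable hm hl
    have s2 := uu_summable hm hm
    have s3 := uu_summable hl hl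
    have e1 : ∑' t : ℕ, 2*(F m t - F l t)^2
        = ∑' t : ℕ, ((uu m l t + uu m l t - uu m m t) - uu l l t) := by
      congr 1; funext t; unfold uu; ring
    rw [e1, Summable.tsum_sub ((s1.add s1).sub s2) s3, Summable.tsum_sub (s1.add s1) s2, Summable.tsum_add s1 s1]
  rw [hcomb]
  exact sum_side hm hl hml hs hdiff

end PoisGap

open MeasureTheory ProbabilityTheory

theorem poisson_expectation_gap {Ω : Type*} [MeasurableSpace Ω] (μ : Measure Ω)
    [IsProbabilityMeasure μ]
    (m l : ℝ) (hm : 0 ≤ m) (hl : 0 ≤ l) (hsum : 1 < l + m) (hdiff : Real.sqrt (l + m) ≤ |l - m|)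
    (X X' Y Y' : Ω → ℝ)
    (hXm : Measurable X) (hX'm : Measurable X') (hYm : Measurable Y) (hY'm : Measurable Y')
    (hindep : iIndepFun ![X, X', Y, Y'] μ)
    (hX : Measure.map X μ = poissonRealMeasure m)
    (hX' : Measure.map X' μ = poissonRealMeasure m)
    (hY : Measure.map Y μ = poissonRealMeasure l)
    (hY' : Measure.map Y' μ = poissonRealMeasure l) :
    ∫ ω, (|X ω - Y ω| + |X' ω - Y' ω| - |X ω - X' ω| - |Y ω - Y' ω|) ∂μ ≥
      (1/5) * |l - m| := by
  rw [ge_iff_le]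
  have iXY : IndepFun X Y μ := hindep.indepFun (show (0 : Fin 4) ≠ 2 by decide)
  have iX'Y' : IndepFun X' Y' μ := hindep.indepFun (show (1 : Fin 4) ≠ 3 by decide)
  have iXX' : IndepFun X X' μ := hindep.indepFun (show (0 : Fin 4) ≠ 1 by decide)
  have iYY' : IndepFun Y Y' μ := hindep.indepFun (show (2 : Fin 4) ≠ 3 by decide)
  rcases le_total m l with h | h
  · have habs : |l - m| = l - m := abs_of_nonneg (by linarith)
    rw [habs]
    rw [habs] at hdiff
    exact PoisGap.main_core μ hm hl h hsum hdiff X X' Y Y' hXm hX'm hYm hY'm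
      iXY iX'Y' iXX' iYY' hX hX' hY hY'
  · have habs : |l - m| = m - l := by rw [abs_of_nonpos (by linarith)]; ring
    rw [habs]
    rw [habs] at hdiff
    have hswap : ∫ ω, (|X ω - Y ω| + |X' ω - Y' ω| - |X ω - X' ω| - |Y ω - Y' ω|) ∂μ
        = ∫ ω, (|Y ω - X ω| + |Y' ω - X' ω| - |Y ω - Y' ω| - |X ω - X' ω|) ∂μ := by
      apply integral_congr_ae
      filter_upwards with ω
      rw [abs_sub_comm (X ω) (Y ω), abs_sub_comm (X' ω) (Y' ω)]
      ring
    rw [hswap]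
    have hs' : 1 < m + l := by linarith
    have hdiff' : Real.sqrt (m + l) ≤ m - l := by rw [add_comm]; exact hdiff
    exact PoisGap.main_core μ hl hm h hs' hdiff' Y Y' X X' hYm hY'm hXm hX'm
      iXY.symm iX'Y'.symm iYY' iXX' hY hY' hX hX'
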